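/- For every measurable A ⊆ 2^ω, the closure of Φ(A) equals supt⁺(A) (the smallest closed set containing A up to a null set) and the interior of Φ(A) equals supt⁻(A) (the largest open set V with μ(V) = μ(V ∩ A)). -/

import Mathlib

open MeasureTheory Filter Topology Set
open scoped ENNReal symmDiff

noncomputable section

/-- The Cantor space `2^ω`. -/
abbrev Cantor : Type := ℕ → Bool

/-- The first `n` digits of `x` as a finite binary string. -/
def seg (x : Cantor) (n : ℕ) : List Bool := List.ofFn (fun i : Fin n => x i)

/-- The basic clopen set `N_s` of all extensions of the finite string `s`. -/
def cyl (s : List Bool) : Set Cantor := {x | seg x s.length = s}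

/-- Concatenation `s⌢x` of a finite string with an infinite sequence. -/
def cat (s : List Bool) (x : Cantor) : Cantor :=
  fun n => if h : n < s.length then s.get ⟨n, h⟩ else x (n - s.length)

/-- The localization `A_s = {x : s⌢x ∈ A}` of `A` at `s`. -/
def loc (s : List Bool) (A : Set Cantor) : Set Cantor := {x | cat s x ∈ A}

/-- `Φ(A)`: the set of points of density `1` in `A`. -/
def dens1 (μ : Measure Cantor) (A : Set Cantor) : Set Cantor :=
  {x | Tendsto (fun n => μ (A ∩ cyl (seg x n)) / μ (cyl (seg x n))) atTop (𝓝 1)}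

/-- `μ` is the coin-tossing (Lebesgue) measure on Cantor space:
it gives each basic clopen set `N_s` measure `2^{-|s|}`. -/
def IsCoin (μ : Measure Cantor) : Prop :=
  ∀ s : List Bool, μ (cyl s) = (2 : ℝ≥0∞)⁻¹ ^ s.length

/-- The inner support: the largest open set on which A has full measure. -/
def suptMinus (μ : Measure Cantor) (A : Set Cantor) : Set Cantor :=
  ⋃₀ {U | IsOpen U ∧ μ U = μ (U ∩ A)}

/-- The outer support: the smallest closed set containing A up to a null set. -/
def suptPlus (μ : Measure Cantor) (A : Set Cantor) : Set Cantor :=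
  ⋂₀ {C | IsClosed C ∧ μ (A \ C) = 0}

@[simp] lemma length_seg (x : Cantor) (n : ℕ) : (seg x n).length = n := List.length_ofFn

@[simp] lemma getElem_seg (x : Cantor) (n : ℕ) (i : ℕ) (h : i < (seg x n).length) :
    (seg x n)[i] = x i := by simp [seg]

lemma mem_cyl {y : Cantor} {s : List Bool} :
    y ∈ cyl s ↔ ∀ i (h : i < s.length), y i = s[i] := by
  constructor
  · intro hy i h
    have hy' : seg y s.length = s := hy
    obtain ⟨n, hn⟩ : ∃ n, s.length = n := ⟨_, rfl⟩
    rw [hn] at hy'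
    subst hy'
    simp
  · intro h
    apply List.ext_getElem (by simp)
    intro i h1 h2
    simp only [getElem_seg]
    exact h i h2

lemma self_mem_cyl_seg (x : Cantor) (n : ℕ) : x ∈ cyl (seg x n) := by
  rw [mem_cyl]; intro i h; simp

lemma mem_cyl_seg_iff {x y : Cantor} {n : ℕ} :
    y ∈ cyl (seg x n) ↔ ∀ i < n, y i = x i := by
  rw [mem_cyl]; simp

lemma cyl_anti {z : Cantor} {s t : List Bool} (hs : z ∈ cyl s) (ht : z ∈ cyl t)
    (hst : s.length ≤ t.length) : cyl t ⊆ cyl s := by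
  intro y hy
  rw [mem_cyl] at *
  intro i h
  calc y i = t[i]'(h.trans_le hst) := hy i _
    _ = z i := (ht i _).symm
    _ = s[i] := hs i h

lemma cyl_seg_anti (x : Cantor) {n m : ℕ} (h : n ≤ m) : cyl (seg x m) ⊆ cyl (seg x n) :=
  cyl_anti (self_mem_cyl_seg x n) (self_mem_cyl_seg x m) (by simp [h])

lemma seg_eq_take {x : Cantor} {s : List Bool} {m : ℕ} (hx : x ∈ cyl s) (hm : m ≤ s.length) :
    seg x m = s.take m := by
  apply List.ext_getElem (by simp [hm])
  intro i h1 h2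
  rw [mem_cyl] at hx
  have hi : i < m := by simpa using h1
  simp only [getElem_seg, List.getElem_take]
  exact hx i (hi.trans_le hm)

lemma measurableSet_cyl (s : List Bool) : MeasurableSet (cyl s) := by
  have : cyl s = ⋂ i : Fin s.length, {y : Cantor | y i = s[i]} := by
    ext y
    simp only [mem_cyl, Set.mem_iInter, Set.mem_setOf_eq]
    exact ⟨fun h i => h i i.2, fun h i hi => h ⟨i, hi⟩⟩
  rw [this]
  exact MeasurableSet.iInter fun i =>
    (measurable_pi_apply (i : ℕ)) (MeasurableSet.singleton _)

lemma exists_cyl_subset {U : Set Cantor} (hU : IsOpen U) {x : Cantor} (hx : x ∈ U) :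
    ∃ n, cyl (seg x n) ⊆ U := by
  rw [isOpen_pi_iff] at hU
  obtain ⟨I, u, hu, hIU⟩ := hU x hx
  refine ⟨(I.sup id) + 1, fun y hy => hIU ?_⟩
  intro i hi
  have : y i = x i := mem_cyl_seg_iff.1 hy i (Nat.lt_succ_of_le (Finset.le_sup (f := id) hi))
  rw [this]
  exact (hu i hi).2

variable {μ : Measure Cantor} {A : Set Cantor}

lemma cyl_ne_zero (hμ : IsCoin μ) (s : List Bool) : μ (cyl s) ≠ 0 := by
  rw [hμ s]; simp

lemma cyl_ne_top (hμ : IsCoin μ) (s : List Bool) : μ (cyl s) ≠ ∞ := by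
  rw [hμ s]
  exact (ENNReal.pow_ne_top (by simp))

lemma univ_eq_cyl_nil : (Set.univ : Set Cantor) = cyl [] := by
  ext x; simp [cyl, seg]

lemma coin_finite (hμ : IsCoin μ) : IsFiniteMeasure μ :=
  ⟨by rw [univ_eq_cyl_nil, hμ]; simp⟩

lemma bad_null (hμ : IsCoin μ) (hA : MeasurableSet A) {c : ℝ≥0∞} (hc : c < 1) :
    μ (A ∩ {x | ∃ᶠ n in atTop, μ (A ∩ cyl (seg x n)) ≤ c * μ (cyl (seg x n))}) = 0 := by
  classical
  haveI := coin_finite hμ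
  letI : PseudoMetricSpace Cantor := TopologicalSpace.pseudoMetrizableSpacePseudoMetric Cantor
  haveI : μ.OuterRegular := inferInstance
  set B := A ∩ {x | ∃ᶠ n in atTop, μ (A ∩ cyl (seg x n)) ≤ c * μ (cyl (seg x n))} with hB
  set t := μ B with htdef
  have ht : t ≠ ∞ := measure_ne_top μ B
  have key : ∀ U : Set Cantor, IsOpen U → B ⊆ U → μ B ≤ c * μ U := by
    intro U hU hBU
    set 𝒞 : Set (List Bool) := {s | cyl s ⊆ U ∧ μ (A ∩ cyl s) ≤ c * μ (cyl s)} with h𝒞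
    set S : Set (List Bool) := {s ∈ 𝒞 | ∀ m < s.length, s.take m ∉ 𝒞} with hSdef
    have hcover : B ⊆ ⋃ s ∈ S, cyl s := by
      intro x hx
      obtain ⟨N, hN⟩ := exists_cyl_subset hU (hBU hx)
      have hx2 : ∃ n, seg x n ∈ 𝒞 := by
        obtain ⟨n, hn, hle⟩ := (frequently_atTop.1 hx.2) N
        refine ⟨n, ⟨(cyl_seg_anti x hn).trans hN, by simpa using hle⟩⟩
      refine Set.mem_biUnion ⟨Nat.find_spec hx2, ?_⟩ (self_mem_cyl_seg x (Nat.find hx2))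
      intro m hm hmem
      have hm' : m < Nat.find hx2 := by simpa using hm
      have hrw : (seg x (Nat.find hx2)).take m = seg x m :=
        (seg_eq_take (self_mem_cyl_seg x (Nat.find hx2)) (by simpa using hm'.le)).symm
      rw [hrw] at hmem
      exact Nat.find_min hx2 hm' hmem
    have key2 : ∀ s ∈ S, ∀ t' ∈ S, s.length ≤ t'.length →
        ∀ z, z ∈ cyl s → z ∈ cyl t' → s = t' := by
      intro s hs t' ht' hle z hzs hzt
      have hs' : seg z s.length = s := hzs
      have ht'' : seg z t'.length = t' := hzt
      rcases eq_or_lt_of_le hle with heq | hlt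
      · rw [← hs', ← ht'', heq]
      · exfalso
        have hst : s = t'.take s.length := by
          have h2 := seg_eq_take hzt hle
          rw [hs'] at h2; exact h2
        exact ht'.2 s.length hlt (hst ▸ hs.1)
    have hdisj : S.PairwiseDisjoint cyl := by
      intro s hs t' ht' hst
      rw [Function.onFun, Set.disjoint_left]
      intro z hzs hzt
      rcases le_total s.length t'.length with h | h
      · exact hst (key2 s hs t' ht' h z hzs hzt)
      · exact hst ((key2 t' ht' s hs h z hzt hzs).symm)
    have hSc : S.Countable := S.to_countable
    calc μ B ≤ μ (⋃ s ∈ S, A ∩ cyl s) := by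
          apply measure_mono
          intro x hx
          obtain ⟨s, hsS, hxs⟩ := Set.mem_iUnion₂.1 (hcover hx)
          exact Set.mem_iUnion₂.2 ⟨s, hsS, hx.1, hxs⟩
      _ ≤ ∑' s : S, μ (A ∩ cyl s) := measure_biUnion_le μ hSc _
      _ ≤ ∑' s : S, c * μ (cyl s) := ENNReal.tsum_le_tsum fun s => s.2.1.2
      _ = c * ∑' s : S, μ (cyl s) := ENNReal.tsum_mul_left
      _ = c * μ (⋃ s ∈ S, cyl s) := by
          rw [measure_biUnion hSc hdisj (fun s _ => measurableSet_cyl s)]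
      _ ≤ c * μ U := by
          gcongr
          exact Set.iUnion₂_subset fun s hs => hs.1.1
  have hmain : t ≤ c * t := by
    apply ENNReal.le_of_forall_pos_le_add
    intro δ hδ _
    obtain ⟨U, hBU, hUo, hUlt⟩ := Set.exists_isOpen_lt_of_lt B (t + δ)
      (ENNReal.lt_add_right ht (by exact_mod_cast hδ.ne'))
    calc t ≤ c * μ U := key U hUo hBU
      _ ≤ c * (t + δ) := mul_le_mul_right hUlt.le c
      _ = c * t + c * δ := mul_add c t δ
      _ ≤ c * t + δ := add_le_add_right (mul_le_of_le_one_left zero_le hc.le) _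
  rcases eq_or_ne t 0 with h0 | h0
  · exact h0
  · exfalso
    have hlt : c * t < 1 * t := by rw [mul_comm c, mul_comm 1]; exact ENNReal.mul_lt_mul_right h0 ht hc
    rw [one_mul] at hlt
    exact lt_irrefl t (lt_of_le_of_lt hmain hlt)

lemma dens1_null (hμ : IsCoin μ) (hA : MeasurableSet A) : μ (A \ dens1 μ A) = 0 := by
  have hsub : A \ dens1 μ A ⊆ ⋃ k : ℕ, A ∩ {x | ∃ᶠ n in atTop,
      μ (A ∩ cyl (seg x n)) ≤ (1 - ((k : ℝ≥0∞))⁻¹) * μ (cyl (seg x n))} := by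
    rintro x ⟨hxA, hxn⟩
    have hxn' : ¬ Tendsto (fun n => μ (A ∩ cyl (seg x n)) / μ (cyl (seg x n))) atTop (𝓝 1) := hxn
    rw [ENNReal.tendsto_nhds ENNReal.one_ne_top] at hxn'
    push_neg at hxn'
    obtain ⟨ε, hε, hfreq⟩ := hxn'
    obtain ⟨k, hk⟩ := ENNReal.exists_inv_nat_lt hε.ne'
    refine Set.mem_iUnion.2 ⟨k, hxA, ?_⟩
    apply hfreq.mono
    intro n hn
    have h0 := cyl_ne_zero hμ (seg x n)
    have htop := cyl_ne_top hμ (seg x n)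
    have hub : μ (A ∩ cyl (seg x n)) / μ (cyl (seg x n)) ≤ 1 :=
      (ENNReal.div_le_iff h0 htop).2 (by rw [one_mul]; exact measure_mono inter_subset_right)
    have hlb : μ (A ∩ cyl (seg x n)) / μ (cyl (seg x n)) < 1 - ε := by
      rcases lt_or_ge (μ (A ∩ cyl (seg x n)) / μ (cyl (seg x n))) (1 - ε) with h | h
      · exact h
      · exact absurd ⟨h, hub.trans le_self_add⟩ hn
    rw [← ENNReal.div_le_iff h0 htop]
    exact le_trans hlb.le (tsub_le_tsub_left hk.le 1)
  refine measure_mono_null hsub (measure_iUnion_null fun k => bad_null hμ hA ?_)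
  exact ENNReal.sub_lt_self ENNReal.one_ne_top one_ne_zero
    (ENNReal.inv_ne_zero.2 (ENNReal.natCast_ne_top k))

lemma dens1_diff_null (hμ : IsCoin μ) (hA : MeasurableSet A) : μ (dens1 μ A \ A) = 0 := by
  have hsub : dens1 μ A \ A ⊆ Aᶜ \ dens1 μ Aᶜ := by
    rintro x ⟨hx1, hx2⟩
    refine ⟨hx2, fun hx3 => ?_⟩
    have hx1' : Tendsto (fun n => μ (A ∩ cyl (seg x n)) / μ (cyl (seg x n))) atTop (𝓝 1) := hx1
    have hx3' : Tendsto (fun n => μ (Aᶜ ∩ cyl (seg x n)) / μ (cyl (seg x n))) atTop (𝓝 1) := hx3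
    have hsum : ∀ n, μ (A ∩ cyl (seg x n)) / μ (cyl (seg x n))
        + μ (Aᶜ ∩ cyl (seg x n)) / μ (cyl (seg x n)) = 1 := by
      intro n
      rw [ENNReal.div_add_div_same]
      have heq : μ (A ∩ cyl (seg x n)) + μ (Aᶜ ∩ cyl (seg x n)) = μ (cyl (seg x n)) := by
        rw [Set.inter_comm, Set.inter_comm Aᶜ, ← Set.diff_eq]
        exact measure_inter_add_diff _ hA
      rw [heq, ENNReal.div_self (cyl_ne_zero hμ _) (cyl_ne_top hμ _)]
    have hadd := hx1'.add hx3'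
    have hconst : Tendsto (fun _ : ℕ => (1 : ℝ≥0∞)) atTop (𝓝 (1 + 1)) := by
      apply hadd.congr
      intro n
      exact hsum n
    have := tendsto_nhds_unique hconst tendsto_const_nhds
    norm_num at this
  exact measure_mono_null hsub (dens1_null hμ hA.compl)


/-- Cl Φ(A) = supt⁺(A) and Int Φ(A) = supt⁻(A). -/
theorem stmt14 (μ : Measure Cantor) (hμ : IsCoin μ) (A : Set Cantor) (hA : MeasurableSet A) :
    closure (dens1 μ A) = suptPlus μ A ∧ interior (dens1 μ A) = suptMinus μ A := by

  haveI := coin_finite hμ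
  constructor
  · apply subset_antisymm
    · apply Set.subset_sInter
      rintro C ⟨hC, hC0⟩
      apply closure_minimal ?_ hC
      intro x hx
      by_contra hxC
      obtain ⟨N, hN⟩ := exists_cyl_subset hC.isOpen_compl hxC
      have h0 : ∀ n ≥ N, μ (A ∩ cyl (seg x n)) / μ (cyl (seg x n)) = 0 := by
        intro n hn
        have hss : A ∩ cyl (seg x n) ⊆ A \ C :=
          fun y hy => ⟨hy.1, hN (cyl_seg_anti x hn hy.2)⟩
        have hnull : μ (A ∩ cyl (seg x n)) = 0 := measure_mono_null hss hC0
        simp [hnull]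
      have hx' : Tendsto (fun n => μ (A ∩ cyl (seg x n)) / μ (cyl (seg x n))) atTop (𝓝 1) := hx
      have h0' : Tendsto (fun n => μ (A ∩ cyl (seg x n)) / μ (cyl (seg x n))) atTop (𝓝 0) :=
        tendsto_const_nhds.congr' (eventually_atTop.2 ⟨N, fun n hn => (h0 n hn).symm⟩)
      have := tendsto_nhds_unique hx' h0'
      norm_num at this
    · apply Set.sInter_subset_of_mem
      refine ⟨isClosed_closure, ?_⟩
      have hss : A \ closure (dens1 μ A) ⊆ A \ dens1 μ A :=
        fun y hy => ⟨hy.1, fun h => hy.2 (subset_closure h)⟩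
      exact measure_mono_null hss (dens1_null hμ hA)
  · apply subset_antisymm
    · apply Set.subset_sUnion_of_mem
      refine ⟨isOpen_interior, ?_⟩
      have hss : interior (dens1 μ A) \ A ⊆ dens1 μ A \ A :=
        fun y hy => ⟨interior_subset hy.1, hy.2⟩
      have h1 : μ (interior (dens1 μ A) \ A) = 0 :=
        measure_mono_null hss (dens1_diff_null hμ hA)
      rw [← measure_inter_add_diff (interior (dens1 μ A)) hA, h1, add_zero]
    · apply Set.sUnion_subset
      rintro U ⟨hUo, hUμ⟩
      have hU0 : μ (U \ A) = 0 := by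
        have h2 : μ (U ∩ A) + μ (U \ A) = μ (U ∩ A) + 0 := by
          rw [add_zero, measure_inter_add_diff U hA, hUμ]
        exact (ENNReal.add_right_inj (measure_ne_top μ _)).1 h2
      have hUd : U ⊆ dens1 μ A := by
        intro x hxU
        obtain ⟨N, hN⟩ := exists_cyl_subset hUo hxU
        have hev : ∀ n ≥ N, μ (A ∩ cyl (seg x n)) / μ (cyl (seg x n)) = 1 := by
          intro n hn
          have hsub : cyl (seg x n) \ A ⊆ U \ A :=
            fun y hy => ⟨hN (cyl_seg_anti x hn hy.1), hy.2⟩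
          have hz : μ (cyl (seg x n) \ A) = 0 := measure_mono_null hsub hU0
          have heq : μ (A ∩ cyl (seg x n)) = μ (cyl (seg x n)) := by
            rw [Set.inter_comm, ← measure_inter_add_diff (cyl (seg x n)) hA, hz, add_zero]
          rw [heq, ENNReal.div_self (cyl_ne_zero hμ _) (cyl_ne_top hμ _)]
        exact tendsto_const_nhds.congr' (eventually_atTop.2 ⟨N, fun n hn => (hev n hn).symm⟩)
      exact interior_maximal hUd hUo
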